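/- Let Z and Z' be independent standard normal random variables, and let μ ∈ ℝ, σ_V > 0, σ_S ∈ ℝ, ρ ∈ ℝ. Set Y = μ + ρ σ_V |Z| + σ_S Z'. Then E[e^Y] = 2 e^{μ + σ_S²/2 + ρ² σ_V²/2} Φ(ρ σ_V), and E[Y] = μ + √(2/π) · ρ σ_V. -/

import Mathlib

open MeasureTheory ProbabilityTheory Real Set
open scoped ENNReal NNReal

/-- The standard normal cumulative distribution function. -/
noncomputable def stdNormalCDF (x : ℝ) : ℝ :=
  ∫ y in Set.Iic x, (Real.sqrt (2 * Real.pi))⁻¹ * Real.exp (-(y ^ 2) / 2)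

namespace FoldedAux

lemma pdf01 (x : ℝ) :
    gaussianPDFReal 0 1 x = (Real.sqrt (2 * π))⁻¹ * Real.exp (-(x ^ 2) / 2) := by
  simp [gaussianPDFReal]

lemma transfer (f : ℝ → ℝ) :
    ∫ x, f x ∂(gaussianReal 0 1) = ∫ x, gaussianPDFReal 0 1 x * f x := by
  rw [gaussianReal_of_var_ne_zero _ one_ne_zero]
  have h : gaussianPDF 0 1 = fun x => ((gaussianPDFReal 0 1 x).toNNReal : ℝ≥0∞) := by
    ext x; simp [gaussianPDF, ENNReal.ofReal]
  rw [h, integral_withDensity_eq_integral_smul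
    ((measurable_gaussianPDFReal 0 1).real_toNNReal)]
  congr 1; ext x
  simp [NNReal.smul_def, Real.coe_toNNReal _ (gaussianPDFReal_nonneg 0 1 x)]

lemma transfer' (f : ℝ → ℝ) :
    ∫ x, f x ∂(gaussianReal 0 1)
      = ∫ x, (Real.sqrt (2 * π))⁻¹ * Real.exp (-(x ^ 2) / 2) * f x := by
  rw [transfer]; simp_rw [pdf01]

lemma int_pdf : ∫ x : ℝ, (Real.sqrt (2 * π))⁻¹ * Real.exp (-(x ^ 2) / 2) = 1 := by
  have h := integral_gaussianPDFReal_eq_one 0 (one_ne_zero (α := ℝ≥0))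
  simp_rw [pdf01] at h
  exact h

lemma cdf_Ioi (a : ℝ) :
    ∫ x in Ioi a, (Real.sqrt (2 * π))⁻¹ * Real.exp (-(x ^ 2) / 2) = stdNormalCDF (-a) := by
  have h := integral_comp_neg_Iic (-a)
    (fun x => (Real.sqrt (2 * π))⁻¹ * Real.exp (-(x ^ 2) / 2))
  simp only [neg_neg, neg_sq] at h
  rw [stdNormalCDF, ← h]

lemma shift_Ioi (f : ℝ → ℝ) (a c : ℝ) :
    ∫ x in Ioi a, f (x - c) = ∫ x in Ioi (a - c), f x := by
  rw [← integral_indicator measurableSet_Ioi, ← integral_indicator measurableSet_Ioi,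
    ← integral_sub_right_eq_self ((Ioi (a - c)).indicator f) c]
  congr 1
  ext x
  rw [Set.indicator_apply, Set.indicator_apply]
  simp [Set.mem_Ioi, sub_lt_sub_iff_right]

lemma gshift (c x : ℝ) :
    Real.exp (-(x ^ 2) / 2) * Real.exp (c * x)
      = Real.exp (c ^ 2 / 2) * Real.exp (-((x - c) ^ 2) / 2) := by
  rw [← Real.exp_add, ← Real.exp_add]; congr 1; ring

lemma int_exp_mul (c : ℝ) :
    ∫ x, Real.exp (c * x) ∂(gaussianReal 0 1) = Real.exp (c ^ 2 / 2) := by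
  rw [transfer']
  have h : ∀ x : ℝ, (Real.sqrt (2 * π))⁻¹ * Real.exp (-(x ^ 2) / 2) * Real.exp (c * x)
      = Real.exp (c ^ 2 / 2)
        * ((fun y => (Real.sqrt (2 * π))⁻¹ * Real.exp (-(y ^ 2) / 2)) (x - c)) := by
    intro x; simp only; rw [mul_assoc, gshift]; ring
  simp_rw [h]
  rw [MeasureTheory.integral_const_mul,
    integral_sub_right_eq_self (fun y => (Real.sqrt (2 * π))⁻¹ * Real.exp (-(y ^ 2) / 2)) c,
    int_pdf, mul_one]

lemma int_exp_abs (c : ℝ) :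
    ∫ x, Real.exp (c * |x|) ∂(gaussianReal 0 1)
      = 2 * Real.exp (c ^ 2 / 2) * stdNormalCDF c := by
  rw [transfer']
  have h1 : ∀ x : ℝ, (Real.sqrt (2 * π))⁻¹ * Real.exp (-(x ^ 2) / 2) * Real.exp (c * |x|)
      = (fun t => (Real.sqrt (2 * π))⁻¹ * Real.exp (-(t ^ 2) / 2) * Real.exp (c * t)) |x| := by
    intro x; simp only [sq_abs]
  simp_rw [h1]
  rw [integral_comp_abs (f := fun t : ℝ => (Real.sqrt (2 * π))⁻¹ * Real.exp (-(t ^ 2) / 2) * Real.exp (c * t))]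
  have h2 : ∀ x : ℝ, (Real.sqrt (2 * π))⁻¹ * Real.exp (-(x ^ 2) / 2) * Real.exp (c * x)
      = Real.exp (c ^ 2 / 2)
        * ((fun y => (Real.sqrt (2 * π))⁻¹ * Real.exp (-(y ^ 2) / 2)) (x - c)) := by
    intro x; simp only; rw [mul_assoc, gshift]; ring
  simp_rw [h2]
  rw [MeasureTheory.integral_const_mul,
    shift_Ioi (fun y => (Real.sqrt (2 * π))⁻¹ * Real.exp (-(y ^ 2) / 2)) 0 c,
    zero_sub, cdf_Ioi, neg_neg]
  ring

lemma xexp : ∫ x in Ioi (0 : ℝ), x * Real.exp (-(x ^ 2) / 2) = 1 := by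
  have hderiv : ∀ x ∈ Ici (0 : ℝ),
      HasDerivAt (fun y : ℝ => -Real.exp (-(y ^ 2) / 2)) (x * Real.exp (-(x ^ 2) / 2)) x := by
    intro x _
    have h : HasDerivAt (fun y : ℝ => -(y ^ 2) / 2) (-x) x := by
      have h0 := ((hasDerivAt_pow 2 x).neg).div_const 2
      refine h0.congr_deriv ?_
      · norm_num; ring
    have h2 := h.exp.neg
    refine h2.congr_deriv ?_
    ring
  have htend : Filter.Tendsto (fun y : ℝ => -Real.exp (-(y ^ 2) / 2)) Filter.atTop (nhds 0) := by
    rw [← neg_zero]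
    refine Filter.Tendsto.neg ?_
    refine Real.tendsto_exp_atBot.comp ?_
    have h1 : Filter.Tendsto (fun y : ℝ => y ^ 2) Filter.atTop Filter.atTop :=
      Filter.tendsto_pow_atTop two_ne_zero
    have h2 := (Filter.tendsto_neg_atTop_atBot.comp h1).atBot_div_const (by norm_num : (0:ℝ) < 2)
    simpa [Function.comp_def] using h2
  have h := integral_Ioi_of_hasDerivAt_of_nonneg' hderiv
    (fun x hx => mul_nonneg (le_of_lt hx) (Real.exp_pos _).le) htend
  simpa using h

lemma sqrt_two_div_pi : 2 * (Real.sqrt (2 * π))⁻¹ = Real.sqrt (2 / π) := by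
  have h : (2 : ℝ) / π = 2 ^ 2 / (2 * π) := by
    field_simp
  rw [h, Real.sqrt_div (by positivity), Real.sqrt_sq (by norm_num), div_eq_mul_inv]

lemma int_abs_val : ∫ x, |x| ∂(gaussianReal 0 1) = Real.sqrt (2 / π) := by
  rw [transfer']
  have h1 : ∀ x : ℝ, (Real.sqrt (2 * π))⁻¹ * Real.exp (-(x ^ 2) / 2) * |x|
      = (fun t => (Real.sqrt (2 * π))⁻¹ * (t * Real.exp (-(t ^ 2) / 2))) |x| := by
    intro x; simp only [sq_abs]; ring
  simp_rw [h1]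
  rw [integral_comp_abs (f := fun t : ℝ => (Real.sqrt (2 * π))⁻¹ * (t * Real.exp (-(t ^ 2) / 2))),
    MeasureTheory.integral_const_mul, xexp, mul_one, sqrt_two_div_pi]

lemma int_id : ∫ x, x ∂(gaussianReal 0 1) = 0 := by
  rw [transfer']
  have h := integral_neg_eq_self
    (fun x : ℝ => (Real.sqrt (2 * π))⁻¹ * Real.exp (-(x ^ 2) / 2) * x) volume
  simp only [neg_sq, mul_neg] at h
  rw [integral_neg] at h
  linarith

lemma int_abs_integrable : Integrable (fun x => |x|) (gaussianReal 0 1) := by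
  rw [gaussianReal_of_var_ne_zero _ one_ne_zero]
  have h : gaussianPDF 0 1 = fun x => ((gaussianPDFReal 0 1 x).toNNReal : ℝ≥0∞) := by
    ext x; simp [gaussianPDF, ENNReal.ofReal]
  rw [h, integrable_withDensity_iff_integrable_smul
    ((measurable_gaussianPDFReal 0 1).real_toNNReal)]
  have h2 := (integrable_rpow_mul_exp_neg_mul_sq (by norm_num : (0:ℝ) < 1/2)
    (by norm_num : (-1:ℝ) < 1)).abs
  refine (h2.const_mul ((Real.sqrt (2 * π))⁻¹)).congr ?_
  filter_upwards with x
  rw [Real.rpow_one, abs_mul, abs_of_pos (Real.exp_pos _), NNReal.smul_def,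
    Real.coe_toNNReal _ (gaussianPDFReal_nonneg 0 1 x), pdf01,
    show -(1 / 2 : ℝ) * x ^ 2 = -(x ^ 2) / 2 by ring, smul_eq_mul]
  ring

lemma int_id_integrable : Integrable (fun x : ℝ => x) (gaussianReal 0 1) := by
  have h : Integrable (fun x : ℝ => ‖(fun y : ℝ => y) x‖) (gaussianReal 0 1) := by
    simpa [Real.norm_eq_abs] using int_abs_integrable
  exact (integrable_norm_iff measurable_id.aestronglyMeasurable).mp h

end FoldedAux

open FoldedAux

/-- In the folded normal model, for `Y = μ + ρ σ_V |Z| + σ_S Z'` with `Z, Z'` independent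
standard normals, `E[e^Y] = 2 e^{μ + σ_S²/2 + ρ²σ_V²/2} Φ(ρ σ_V)` and
`E[Y] = μ + √(2/π) ρ σ_V`. -/
theorem stmt_13 {Ω : Type*} [MeasurableSpace Ω] (P : Measure Ω) [IsProbabilityMeasure P]
    (Z Z' : Ω → ℝ)
    (hlaw : P.map (fun ω => (Z ω, Z' ω)) = (gaussianReal 0 1).prod (gaussianReal 0 1))
    (μ σV σS ρ : ℝ) (hσV : 0 < σV)
    (Y : Ω → ℝ) (hY : Y = fun ω => μ + ρ * σV * |Z ω| + σS * Z' ω) :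
    (∫ ω, Real.exp (Y ω) ∂P
        = 2 * Real.exp (μ + σS ^ 2 / 2 + ρ ^ 2 * σV ^ 2 / 2) * stdNormalCDF (ρ * σV)) ∧
    (∫ ω, Y ω ∂P = μ + Real.sqrt (2 / Real.pi) * (ρ * σV)) := by
  set γ := gaussianReal 0 1 with hγ
  have hZmeas : AEMeasurable (fun ω => (Z ω, Z' ω)) P := by
    apply aemeasurable_of_map_neZero
    rw [hlaw]
    exact ⟨IsProbabilityMeasure.ne_zero _⟩
  have key : ∀ F : ℝ × ℝ → ℝ, Measurable F →
      ∫ ω, F (Z ω, Z' ω) ∂P = ∫ p, F p ∂(γ.prod γ) := by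
    intro F hF
    rw [← hlaw]
    exact (integral_map hZmeas hF.aestronglyMeasurable).symm
  subst hY
  constructor
  · have hmeas : Measurable fun p : ℝ × ℝ => Real.exp (μ + ρ * σV * |p.1| + σS * p.2) := by
      fun_prop
    have h0 := key _ hmeas
    simp only at h0
    rw [h0]
    have hfact : ∀ p : ℝ × ℝ, Real.exp (μ + ρ * σV * |p.1| + σS * p.2)
        = (Real.exp μ * Real.exp (ρ * σV * |p.1|)) * Real.exp (σS * p.2) := by
      intro p; rw [← Real.exp_add, ← Real.exp_add]
    simp_rw [hfact]
    rw [integral_prod_mul (fun x => Real.exp μ * Real.exp (ρ * σV * |x|))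
      (fun y => Real.exp (σS * y)), MeasureTheory.integral_const_mul, int_exp_abs, int_exp_mul]
    rw [Real.exp_add, Real.exp_add]
    ring
  · have hmeas : Measurable fun p : ℝ × ℝ => μ + ρ * σV * |p.1| + σS * p.2 := by
      fun_prop
    have h0 := key _ hmeas
    simp only at h0
    rw [h0]
    have hi1 : Integrable (fun _ : ℝ × ℝ => μ) (γ.prod γ) := integrable_const μ
    have habs : Integrable (fun p : ℝ × ℝ => |p.1|) (γ.prod γ) := by
      have h : Integrable (fun x => |x|) (Measure.map Prod.fst (γ.prod γ)) := by
        rw [Measure.map_fst_prod]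
        simpa using int_abs_integrable
      exact (integrable_map_measure (measurable_abs.aestronglyMeasurable)
        measurable_fst.aemeasurable).mp h
    have hsnd : Integrable (fun p : ℝ × ℝ => p.2) (γ.prod γ) := by
      have h : Integrable (fun x : ℝ => x) (Measure.map Prod.snd (γ.prod γ)) := by
        rw [Measure.map_snd_prod]
        simpa using int_id_integrable
      exact (integrable_map_measure (measurable_id.aestronglyMeasurable)
        measurable_snd.aemeasurable).mp h
    have hi2 : Integrable (fun p : ℝ × ℝ => ρ * σV * |p.1|) (γ.prod γ) := habs.const_mul _
    have hi3 : Integrable (fun p : ℝ × ℝ => σS * p.2) (γ.prod γ) := hsnd.const_mul _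
    have hi12 : Integrable (fun p : ℝ × ℝ => μ + ρ * σV * |p.1|) (γ.prod γ) := hi1.add hi2
    rw [integral_add hi12 hi3, integral_add hi1 hi2, MeasureTheory.integral_const_mul,
      MeasureTheory.integral_const_mul]
    have e1 : ∫ p : ℝ × ℝ, |p.1| ∂(γ.prod γ) = Real.sqrt (2 / π) := by
      have h := integral_map (μ := γ.prod γ) measurable_fst.aemeasurable
        (f := fun x : ℝ => |x|) measurable_abs.aestronglyMeasurable
      rw [Measure.map_fst_prod] at h
      simp only [measure_univ, one_smul] at h
      rw [← h, int_abs_val]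
    have e2 : ∫ p : ℝ × ℝ, p.2 ∂(γ.prod γ) = 0 := by
      have h := integral_map (μ := γ.prod γ) measurable_snd.aemeasurable
        (f := fun x : ℝ => x) measurable_id.aestronglyMeasurable
      rw [Measure.map_snd_prod] at h
      simp only [measure_univ, one_smul] at h
      rw [← h, int_id]
    rw [e1, e2]
    simp [measure_univ]
    ring
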